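/- Let G be an induced subgraph of the grid ℤ^k (vertices are k-tuples of integers; edges increase one coordinate by 1) whose vertex set V satisfies: (i) if u, w ∈ V then the coordinatewise minimum min(u,w) ∈ V; (ii) if u ∈ V and u + m·e_i ∈ V for some positive integer m, then u + s·e_i ∈ V for all 0 ≤ s ≤ m. Let u, v ∈ V with deg u ≥ deg v (deg = coordinate sum), and suppose φ is a formal series in monomials of degree deg v such that: the coefficient of v in φ is 1; the coefficient of any other v' ∈ V with deg v' = deg v is 0; and for any w ∉ V with w + e_i ∈ V for some i and deg w ≥ deg v, the coefficient of w in φ·(x_1+...+x_k)^{deg w − deg v} is 0. Then the number of directed paths in G from v to u equals the coefficient of u in φ·(x_1+...+x_k)^{deg u − deg v}. -/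

import Mathlib

open Finset

/-- Multiplication of a formal series (given by its coefficient function on the
monomials `ℤ^k`) by `x₁ + ⋯ + x_k`: the coefficient of `w` in `φ·(x₁+⋯+x_k)` is
`∑ᵢ [w/xᵢ]φ`. -/
def mulSum {k : ℕ} (φ : (Fin k → ℤ) → ℚ) : (Fin k → ℤ) → ℚ :=
  fun w => ∑ i : Fin k, φ (fun t => w t - if t = i then 1 else 0)

/-- A directed path of length `N` from `v` to `u` inside the induced subgraph of the
grid `ℤ^k` on a vertex set `V`: each step increases exactly one coordinate by `1`,
and all vertices of the path lie in `V`. -/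
def GridPath (k N : ℕ) (V : Set (Fin k → ℤ)) (v u : Fin k → ℤ) : Type :=
  { f : Fin (N + 1) → (Fin k → ℤ) //
      f 0 = v ∧ f (Fin.last N) = u ∧ (∀ j, f j ∈ V) ∧
      ∀ j : Fin N, ∃ i : Fin k,
        f j.succ = fun t => f j.castSucc t + if t = i then 1 else 0 }

namespace StmtAux

variable {k N : ℕ} {V : Set (Fin k → ℤ)} {v u : Fin k → ℤ}

instance gp0 : Subsingleton (GridPath k 0 V v u) := by
  constructor
  intro p q
  apply Subtype.ext
  funext j
  have hj : j = 0 := Fin.fin_one_eq_zero j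
  rw [hj, p.2.1, q.2.1]

/-- Extend a path by one final step in direction `i`. -/
def extend (hu : u ∈ V)
    (q : Σ i : Fin k, GridPath k N V v (fun t => u t - if t = i then 1 else 0)) :
    GridPath k (N + 1) V v u := by
  obtain ⟨i, g, hg0, hgl, hgm, hgs⟩ := q
  refine ⟨Fin.snoc g u, ?_, ?_, ?_, ?_⟩
  · rw [show (0 : Fin (N+1+1)) = Fin.castSucc 0 by simp, Fin.snoc_castSucc, hg0]
  · exact Fin.snoc_last _ _
  · intro j
    induction j using Fin.lastCases with
    | last => rw [Fin.snoc_last]; exact hu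
    | cast j => rw [Fin.snoc_castSucc]; exact hgm j
  · intro j
    induction j using Fin.lastCases with
    | last =>
      refine ⟨i, ?_⟩
      rw [Fin.succ_last, Fin.snoc_last, Fin.snoc_castSucc, hgl]
      funext t
      simp only []
      ring
    | cast j =>
      obtain ⟨i', hi'⟩ := hgs j
      refine ⟨i', ?_⟩
      rw [Fin.succ_castSucc, Fin.snoc_castSucc, Fin.snoc_castSucc, hi']

lemma extend_injective (hu : u ∈ V) : Function.Injective (extend (v := v) (N := N) hu) := by
  rintro ⟨i, g, hg0, hgl, hgm, hgs⟩ ⟨i', g', hg0', hgl', hgm', hgs'⟩ h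
  have hval : (Fin.snoc g u : Fin (N+1+1) → (Fin k → ℤ)) = Fin.snoc g' u :=
    congrArg Subtype.val h
  have hgg : g = g' := by
    funext j
    have := congrFun hval j.castSucc
    rwa [Fin.snoc_castSucc, Fin.snoc_castSucc] at this
  have hii : i = i' := by
    have h1 : (fun t => u t - if t = i then (1:ℤ) else 0)
        = (fun t => u t - if t = i' then (1:ℤ) else 0) := by
      rw [← hgl, ← hgl', hgg]
    by_contra hne
    have := congrFun h1 i
    simp [hne] at this
  subst hii
  subst hgg
  rfl

/-- Truncate a path of length `N+1` to its first `N+1` vertices, recording the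
last step direction. -/
noncomputable def trunc (p : GridPath k (N + 1) V v u) :
    Σ i : Fin k, GridPath k N V v (fun t => u t - if t = i then 1 else 0) := by
  obtain ⟨f, hf0, hfl, hfm, hfs⟩ := p
  choose dir hdir using hfs
  refine ⟨dir (Fin.last N), fun j => f j.castSucc, ?_, ?_, fun j => hfm _, ?_⟩
  · show f (Fin.castSucc 0) = v
    rw [Fin.castSucc_zero, hf0]
  · have := hdir (Fin.last N)
    rw [Fin.succ_last, hfl] at this
    funext t
    have := congrFun this t
    simp only [] at this ⊢
    omega
  · intro j
    refine ⟨dir j.castSucc, ?_⟩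
    have := hdir j.castSucc
    rwa [Fin.succ_castSucc] at this

lemma extend_val (hu : u ∈ V)
    (q : Σ i : Fin k, GridPath k N V v (fun t => u t - if t = i then 1 else 0)) :
    (extend hu q).1 = Fin.snoc q.2.1 u := by
  obtain ⟨i, g, hg0, hgl, hgm, hgs⟩ := q
  rfl

lemma extend_trunc (hu : u ∈ V) (p : GridPath k (N + 1) V v u) :
    extend hu (trunc p) = p := by
  obtain ⟨f, hf0, hfl, hfm, hfs⟩ := p
  apply Subtype.ext
  rw [extend_val]
  show (Fin.snoc (fun j => f j.castSucc) u : Fin (N+1+1) → (Fin k → ℤ)) = f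
  funext j
  induction j using Fin.lastCases with
  | last => rw [Fin.snoc_last, hfl]
  | cast j => rw [Fin.snoc_castSucc]

lemma extend_surjective (hu : u ∈ V) : Function.Surjective (extend (v := v) (N := N) hu) :=
  fun p => ⟨trunc p, extend_trunc hu p⟩

lemma gridPath_finite (k N : ℕ) (V : Set (Fin k → ℤ)) (v u : Fin k → ℤ) :
    Finite (GridPath k N V v u) := by
  induction N generalizing u with
  | zero => exact Finite.of_subsingleton
  | succ N ih =>
    by_cases hu : u ∈ V
    · haveI : ∀ i : Fin k, Finite (GridPath k N V v (fun t => u t - if t = i then 1 else 0)) :=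
        fun i => ih _
      exact Finite.of_surjective _ (extend_surjective hu)
    · haveI : IsEmpty (GridPath k (N+1) V v u) := by
        constructor
        rintro ⟨f, -, hfl, hfm, -⟩
        exact hu (hfl ▸ hfm (Fin.last (N+1)))
      exact Finite.of_subsingleton

lemma card_succ (hu : u ∈ V) :
    Nat.card (GridPath k (N + 1) V v u)
      = ∑ i : Fin k, Nat.card (GridPath k N V v (fun t => u t - if t = i then 1 else 0)) := by
  haveI : ∀ i : Fin k, Finite (GridPath k N V v (fun t => u t - if t = i then 1 else 0)) :=
    fun i => gridPath_finite _ _ _ _ _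
  haveI : ∀ i : Fin k, Fintype (GridPath k N V v (fun t => u t - if t = i then 1 else 0)) :=
    fun i => Fintype.ofFinite _
  rw [← Nat.card_eq_of_bijective _ ⟨extend_injective hu, extend_surjective hu⟩]
  rw [Nat.card_eq_fintype_card, Fintype.card_sigma]
  simp [Nat.card_eq_fintype_card]

end StmtAux

namespace StmtAux

lemma main {k : ℕ} {V : Set (Fin k → ℤ)} {v : Fin k → ℤ} (hv : v ∈ V)
    (φ : (Fin k → ℤ) → ℚ)
    (hφv : φ v = 1)
    (hφv' : ∀ v' ∈ V, (∑ i, v' i) = (∑ i, v i) → v' ≠ v → φ v' = 0)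
    (hbd : ∀ w : Fin k → ℤ, w ∉ V →
      (∃ i : Fin k, (fun t => w t + if t = i then (1 : ℤ) else 0) ∈ V) →
      (∑ i, v i) ≤ (∑ i, w i) →
      (mulSum^[((∑ i, w i) - ∑ i, v i).toNat] φ) w = 0) :
    ∀ n : ℕ, ∀ u : Fin k → ℤ, u ∈ V → (∑ i, u i) = (∑ i, v i) + n →
      (Nat.card (GridPath k n V v u) : ℚ) = (mulSum^[n] φ) u := by
  intro n
  induction n with
  | zero =>
    intro u hu hsum
    simp only [Function.iterate_zero, id]
    by_cases h : u = v
    · subst h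
      have h1 : Nat.card (GridPath k 0 V u u) = 1 := by
        rw [Nat.card_eq_one_iff_unique]
        refine ⟨gp0, ⟨⟨fun _ => u, rfl, rfl, fun _ => hu, fun j => j.elim0⟩⟩⟩
      rw [h1, hφv]
      norm_num
    · rw [hφv' u hu (by omega) h]
      haveI : IsEmpty (GridPath k 0 V v u) := by
        constructor
        rintro ⟨f, hf0, hfl, -⟩
        have : Fin.last 0 = 0 := rfl
        rw [this, hf0] at hfl
        exact h hfl.symm
      simp
  | succ n ih =>
    intro u hu hsum
    rw [Function.iterate_succ_apply', card_succ hu]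
    show _ = ∑ i : Fin k, (mulSum^[n] φ) (fun t => u t - if t = i then 1 else 0)
    push_cast
    apply Finset.sum_congr rfl
    intro i _
    set w : Fin k → ℤ := fun t => u t - if t = i then 1 else 0 with hw
    have hsw : ∑ t, w t = ∑ t, v t + n := by
      have : ∑ t, w t = (∑ t, u t) - ∑ t, (if t = i then (1:ℤ) else 0) := by
        rw [← Finset.sum_sub_distrib]
      rw [Finset.sum_ite_eq' Finset.univ i (fun _ => (1:ℤ))] at this
      simp at this
      omega
    by_cases hwV : w ∈ V
    · exact ih w hwV hsw
    · have h1 : (fun t => w t + if t = i then (1:ℤ) else 0) = u := by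
        funext t
        by_cases ht : t = i <;> simp [hw, ht]
      have h2 := hbd w hwV ⟨i, h1 ▸ hu⟩ (by omega)
      have h3 : ((∑ t, w t) - ∑ t, v t).toNat = n := by omega
      rw [h3] at h2
      rw [h2]
      haveI : IsEmpty (GridPath k n V v w) := by
        constructor
        rintro ⟨f, -, hfl, hfm, -⟩
        exact hwV (hfl ▸ hfm (Fin.last n))
      simp

end StmtAux

/-- Path-counting via coefficients: if `V ⊆ ℤ^k` is minimum-closed and coordinate
convex, `u, v ∈ V` with `deg u ≥ deg v` (`deg` = coordinate sum), and `φ` is a formal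
series supported in degree `deg v` with `[v]φ = 1`, `[v']φ = 0` for other vertices `v'`
of degree `deg v`, and `[w](φ·(x₁+⋯+x_k)^{deg w - deg v}) = 0` for every non-vertex `w`
of degree `≥ deg v` with `w + eᵢ ∈ V` for some `i`, then the number of directed paths
from `v` to `u` in the induced graph equals `[u](φ·(x₁+⋯+x_k)^{deg u - deg v})`. -/
theorem stmt_19 (k : ℕ) (hk : 0 < k) (V : Set (Fin k → ℤ))
    (hmin : ∀ u ∈ V, ∀ w ∈ V, (fun t => min (u t) (w t)) ∈ V)
    (hconv : ∀ u ∈ V, ∀ i : Fin k, ∀ mm : ℕ,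
      (fun t => u t + if t = i then (mm : ℤ) else 0) ∈ V →
      ∀ s : ℕ, s ≤ mm → (fun t => u t + if t = i then (s : ℤ) else 0) ∈ V)
    (v u : Fin k → ℤ) (hv : v ∈ V) (hu : u ∈ V) (hdeg : ∑ i, v i ≤ ∑ i, u i)
    (φ : (Fin k → ℤ) → ℚ)
    (hhom : ∀ w : Fin k → ℤ, (∑ i, w i) ≠ (∑ i, v i) → φ w = 0)
    (hφv : φ v = 1)
    (hφv' : ∀ v' ∈ V, (∑ i, v' i) = (∑ i, v i) → v' ≠ v → φ v' = 0)
    (hbd : ∀ w : Fin k → ℤ, w ∉ V →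
      (∃ i : Fin k, (fun t => w t + if t = i then (1 : ℤ) else 0) ∈ V) →
      (∑ i, v i) ≤ (∑ i, w i) →
      (mulSum^[((∑ i, w i) - ∑ i, v i).toNat] φ) w = 0) :
    (Nat.card (GridPath k ((∑ i, u i) - ∑ i, v i).toNat V v u) : ℚ) =
      (mulSum^[((∑ i, u i) - ∑ i, v i).toNat] φ) u := by
  exact StmtAux.main hv φ hφv hφv' hbd _ u hu (by omega)
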